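/- Let 𝔤 be the vector space with basis {Ψ_i : i ≥ 2} over ℝ, and for a fixed nonzero real λ define a bilinear antisymmetric bracket by {Ψ_i, Ψ_j} = (j−i)(Ψ_{i+j} + λ^{-1}Ψ_{i+j−1}) − (j−1)(Ψ_{j+1} + λ^{-1}Ψ_j) + (i−1)(Ψ_{i+1} + λ^{-1}Ψ_i) for j > i ≥ 2 (extended by antisymmetry). Then this bracket satisfies the Jacobi identity, making 𝔤 a Lie algebra. -/

import Mathlib

open Finsupp

/-- Structure constants of the bracket `{Ψ_i, Ψ_j}` for `i < j`:
`(j−i)(Ψ_{i+j} + λ⁻¹Ψ_{i+j−1}) − (j−1)(Ψ_{j+1} + λ⁻¹Ψ_j) + (i−1)(Ψ_{i+1} + λ⁻¹Ψ_i)`. -/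
noncomputable def psiB0 (lam : ℝ) (i j : ℕ) : ℕ →₀ ℝ :=
  ((j : ℝ) - i) • (Finsupp.single (i + j) (1 : ℝ) + lam⁻¹ • Finsupp.single (i + j - 1) (1 : ℝ))
  - ((j : ℝ) - 1) • (Finsupp.single (j + 1) (1 : ℝ) + lam⁻¹ • Finsupp.single j (1 : ℝ))
  + ((i : ℝ) - 1) • (Finsupp.single (i + 1) (1 : ℝ) + lam⁻¹ • Finsupp.single i (1 : ℝ))

/-- Bracket on basis elements, extended antisymmetrically. -/
noncomputable def psiB (lam : ℝ) (i j : ℕ) : ℕ →₀ ℝ :=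
  if i < j then psiB0 lam i j else if j < i then -psiB0 lam j i else 0

/-- Bilinear extension of the bracket to the free module with basis `{Ψ_i}`. -/
noncomputable def psiBr (lam : ℝ) (f g : ℕ →₀ ℝ) : ℕ →₀ ℝ :=
  f.sum fun i a => g.sum fun j b => (a * b) • psiB lam i j

open Polynomial

noncomputable def uu (m : ℕ) : Polynomial ℝ := X ^ m - X

noncomputable def br (lam : ℝ) (p q : Polynomial ℝ) : Polynomial ℝ :=
  (X + C lam⁻¹) * (p * derivative q - q * derivative p)

lemma br_jacobi (lam : ℝ) (p q r : Polynomial ℝ) :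
    br lam p (br lam q r) + br lam q (br lam r p) + br lam r (br lam p q) = 0 := by
  simp only [br, derivative_mul, derivative_add, derivative_sub, derivative_X, derivative_C]
  ring

noncomputable def brL (lam : ℝ) (p : Polynomial ℝ) : Polynomial ℝ →ₗ[ℝ] Polynomial ℝ where
  toFun q := br lam p q
  map_add' x y := by simp only [br, derivative_add]; ring
  map_smul' c x := by
    simp only [br, derivative_smul, RingHom.id_apply]
    simp only [smul_eq_C_mul]; ring

noncomputable def PP : (ℕ →₀ ℝ) →ₗ[ℝ] Polynomial ℝ := Finsupp.linearCombination ℝ uu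

lemma PP_single (m : ℕ) : PP (Finsupp.single m 1) = uu m := by simp [PP]

lemma PP_coeff (f : ℕ →₀ ℝ) (n : ℕ) (hn : 2 ≤ n) : (PP f).coeff n = f n := by
  rw [PP, Finsupp.linearCombination_apply, Finsupp.sum, Polynomial.finset_sum_coeff]
  rw [show (f.support.sum fun m => (f m • uu m).coeff n) =
    f.support.sum fun m => if n = m then f m else 0 from ?_]
  · rw [Finset.sum_ite_eq f.support n (fun m => f m)]
    by_cases hs : n ∈ f.support
    · simp [hs]
    · simp [hs, Finsupp.notMem_support_iff.mp hs]
  · apply Finset.sum_congr rfl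
    intro m hm
    have : (X:Polynomial ℝ).coeff n = 0 := by rw [Polynomial.coeff_X]; simp; omega
    simp [uu, Polynomial.coeff_X_pow, this]

lemma PP_inj (f : ℕ →₀ ℝ) (hf : ∀ m, f m ≠ 0 → 2 ≤ m) (h : PP f = 0) : f = 0 := by
  ext n
  simp only [Finsupp.coe_zero, Pi.zero_apply]
  by_cases hn : 2 ≤ n
  · have := congrArg (fun p => Polynomial.coeff p n) h
    simpa [PP_coeff f n hn] using this
  · by_contra hne
    exact hn (hf n hne)

lemma PP_psiB0 (lam : ℝ) (i j : ℕ) (hi : 2 ≤ i) (hj : 2 ≤ j) :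
    PP (psiB0 lam i j) = br lam (uu i) (uu j) := by
  obtain ⟨a, rfl⟩ := Nat.exists_eq_add_of_le hi
  obtain ⟨b, rfl⟩ := Nat.exists_eq_add_of_le hj
  have h1 : 2 + a + (2 + b) - 1 = a + b + 3 := by omega
  have h2 : 2 + a + (2 + b) = a + b + 4 := by omega
  have h3 : 2 + a - 1 = a + 1 := by omega
  have h4 : 2 + b - 1 = b + 1 := by omega
  simp only [psiB0, map_add, map_sub, map_smul, PP_single, h1, h2, h3, h4, uu, br,
    derivative_sub, derivative_X_pow, derivative_X, smul_eq_C_mul, map_add, map_sub,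
    map_one, map_ofNat, Nat.cast_add, Nat.cast_ofNat, Nat.cast_one]
  push_cast
  ring

lemma PP_psiB (lam : ℝ) (i j : ℕ) (hi : 2 ≤ i) (hj : 2 ≤ j) :
    PP (psiB lam i j) = br lam (uu i) (uu j) := by
  rcases lt_trichotomy i j with h | h | h
  · rw [psiB, if_pos h, PP_psiB0 lam i j hi hj]
  · subst h
    rw [psiB, if_neg (lt_irrefl i), if_neg (lt_irrefl i)]
    simp only [map_zero, br]; ring
  · rw [psiB, if_neg (not_lt.mpr h.le), if_pos h, map_neg, PP_psiB0 lam j i hj hi]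
    simp only [br]; ring

lemma psiB0_apply_lt (lam : ℝ) (i j m : ℕ) (hi : 2 ≤ i) (hj : 2 ≤ j) (hm : m < 2) :
    psiB0 lam i j m = 0 := by
  simp only [psiB0, Finsupp.add_apply, Finsupp.sub_apply, Finsupp.smul_apply,
    Finsupp.single_apply, smul_eq_mul]
  rw [if_neg (by omega), if_neg (by omega), if_neg (by omega), if_neg (by omega),
    if_neg (by omega), if_neg (by omega)]
  ring

lemma psiB_apply_lt (lam : ℝ) (i j m : ℕ) (hi : 2 ≤ i) (hj : 2 ≤ j) (hm : m < 2) :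
    psiB lam i j m = 0 := by
  rw [psiB]
  split
  · exact psiB0_apply_lt lam i j m hi hj hm
  · split
    · simp [psiB0_apply_lt lam j i m hj hi hm]
    · rfl

lemma psiBr_single (lam : ℝ) (i : ℕ) (g : ℕ →₀ ℝ) :
    psiBr lam (Finsupp.single i 1) g = g.sum fun j b => b • psiB lam i j := by
  rw [psiBr, Finsupp.sum_single_index]
  · simp only [one_mul]
  · simp only [zero_mul, zero_smul, Finsupp.sum, Finset.sum_const_zero]

lemma psiBr_single_single (lam : ℝ) (i j : ℕ) :
    psiBr lam (Finsupp.single i 1) (Finsupp.single j 1) = psiB lam i j := by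
  rw [psiBr_single, Finsupp.sum_single_index] <;> simp

lemma psiBr_single_apply_lt (lam : ℝ) (i : ℕ) (h : ℕ →₀ ℝ) (hi : 2 ≤ i)
    (hh : ∀ m, h m ≠ 0 → 2 ≤ m) (m : ℕ) (hm : m < 2) :
    psiBr lam (Finsupp.single i 1) h m = 0 := by
  rw [psiBr_single, Finsupp.sum_apply, Finsupp.sum]
  apply Finset.sum_eq_zero
  intro j hjs
  have hj : 2 ≤ j := hh j (Finsupp.mem_support_iff.mp hjs)
  simp [psiB_apply_lt lam i j m hi hj hm]

lemma PP_psiBr_single (lam : ℝ) (i : ℕ) (h : ℕ →₀ ℝ) (hi : 2 ≤ i)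
    (hh : ∀ m, h m ≠ 0 → 2 ≤ m) :
    PP (psiBr lam (Finsupp.single i 1) h) = br lam (uu i) (PP h) := by
  rw [psiBr_single, map_finsuppSum]
  have : br lam (uu i) (PP h) = brL lam (uu i) (PP h) := rfl
  rw [this, PP, Finsupp.linearCombination_apply, map_finsuppSum]
  apply Finsupp.sum_congr
  intro j hjs
  have hj : 2 ≤ j := hh j (Finsupp.mem_support_iff.mp hjs)
  have hPB := PP_psiB lam i j hi hj
  rw [PP] at hPB
  rw [map_smul, hPB, map_smul]
  rfl

/-- the bracket `{Ψ_i, Ψ_j}` satisfies the Jacobi identity on the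
generators `Ψ_i`, `i ≥ 2`, making the free module with basis `{Ψ_i : i ≥ 2}`
a Lie algebra. -/
theorem psi_bracket_jacobi (lam : ℝ) (hlam : lam ≠ 0) :
    ∀ i j k : ℕ, 2 ≤ i → 2 ≤ j → 2 ≤ k →
      psiBr lam (Finsupp.single i 1) (psiBr lam (Finsupp.single j 1) (Finsupp.single k 1))
      + psiBr lam (Finsupp.single j 1) (psiBr lam (Finsupp.single k 1) (Finsupp.single i 1))
      + psiBr lam (Finsupp.single k 1) (psiBr lam (Finsupp.single i 1) (Finsupp.single j 1))
      = 0 := by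
  intro i j k hi hj hk
  have hB : ∀ a b : ℕ, 2 ≤ a → 2 ≤ b → ∀ m, psiB lam a b m ≠ 0 → 2 ≤ m := by
    intro a b ha hb m hm
    by_contra hlt
    exact hm (psiB_apply_lt lam a b m ha hb (by omega))
  apply PP_inj
  · intro m hm
    by_contra hlt
    apply hm
    simp only [Finsupp.add_apply, psiBr_single_single]
    rw [psiBr_single_apply_lt lam i _ hi (hB j k hj hk) m (by omega),
      psiBr_single_apply_lt lam j _ hj (hB k i hk hi) m (by omega),
      psiBr_single_apply_lt lam k _ hk (hB i j hi hj) m (by omega)]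
    ring
  · simp only [map_add, psiBr_single_single]
    rw [PP_psiBr_single lam i _ hi (hB j k hj hk),
      PP_psiBr_single lam j _ hj (hB k i hk hi),
      PP_psiBr_single lam k _ hk (hB i j hi hj)]
    rw [PP_psiB lam j k hj hk, PP_psiB lam k i hk hi, PP_psiB lam i j hi hj]
    exact br_jacobi lam (uu i) (uu j) (uu k)
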